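/- arXiv:2412.19281 — 3 statements merged into one kernel-verified Lean document; each statement's English description precedes it below -/
import Mathlib

section
/- Let r > 4, 2 < α ≤ 3, and for finite A ⊂ ℤ² let B_ℓ(A) be the union of all ℓ-cubes C with |C ∩ A| ≥ |C|/2. Then there exists b₇ = b₆^{-1}·2^{2r+1} such that for all ℓ ≥ 0, the symmetric difference satisfies |B_ℓ(A) Δ B_{ℓ+1}(A)| ≤ b₇ · 2^{rℓ(α−2)} · Q_ℓ(A). -/
/-- Long-range interaction in `ℤ²`: `|x - y|^{-α}` with Euclidean distance. -/
noncomputable def Jint2 (α : ℝ) (p q : ℤ × ℤ) : ℝ :=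
  (Real.sqrt (((p.1 - q.1 : ℤ) : ℝ) ^ 2 + ((p.2 - q.2 : ℤ) : ℝ) ^ 2)) ^ (-α)

/-- The cube of side `s` in `ℤ²` with lower corner `s • x`. -/
noncomputable def cube2 (s : ℕ) (x : ℤ × ℤ) : Finset (ℤ × ℤ) :=
  Finset.Ico ((s : ℤ) * x.1) ((s : ℤ) * (x.1 + 1)) ×ˢ
    Finset.Ico ((s : ℤ) * x.2) ((s : ℤ) * (x.2 + 1))

/-- The `ℓ`-cube indexed by `x`, shrunk by an outer layer of thickness `2^{r(ℓ-1)}`. -/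
noncomputable def hatcube2 (r ℓ : ℕ) (x : ℤ × ℤ) : Finset (ℤ × ℤ) :=
  Finset.Ico ((2 ^ (r * ℓ) : ℤ) * x.1 + 2 ^ (r * ℓ) / 2 ^ r)
             ((2 ^ (r * ℓ) : ℤ) * (x.1 + 1) - 2 ^ (r * ℓ) / 2 ^ r) ×ˢ
  Finset.Ico ((2 ^ (r * ℓ) : ℤ) * x.2 + 2 ^ (r * ℓ) / 2 ^ r)
             ((2 ^ (r * ℓ) : ℤ) * (x.2 + 1) - 2 ^ (r * ℓ) / 2 ^ r)

/-- `Q_ℓ(A)`. -/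
noncomputable def Qlev (r : ℕ) (α : ℝ) (A : Finset (ℤ × ℤ)) (ℓ : ℕ) : ℝ :=
  ∑' x : ℤ × ℤ, ∑' x' : ℤ × ℤ,
    if |x.1 - x'.1| + |x.2 - x'.2| = 1 ∧
        (cube2 (2 ^ (r * ℓ)) x).card ≤
          2 * ((cube2 (2 ^ (r * ℓ)) x).filter (· ∈ A)).card ∧
        2 * ((cube2 (2 ^ (r * ℓ)) x').filter (· ∈ A)).card <
          (cube2 (2 ^ (r * ℓ)) x').card
    then ∑ p ∈ (hatcube2 r ℓ x).filter (· ∈ A),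
           ∑ q ∈ (hatcube2 r ℓ x').filter (· ∉ A), Jint2 α p q
    else 0

/-- `B_ℓ(A)`: the union of all admissible `ℓ`-cubes. -/
def Blev (r : ℕ) (A : Finset (ℤ × ℤ)) (ℓ : ℕ) : Set (ℤ × ℤ) :=
  {p | ∃ x : ℤ × ℤ, p ∈ cube2 (2 ^ (r * ℓ)) x ∧
    (cube2 (2 ^ (r * ℓ)) x).card ≤ 2 * ((cube2 (2 ^ (r * ℓ)) x).filter (· ∈ A)).card}


lemma mem_cube2 {s : ℕ} {x p : ℤ × ℤ} :
    p ∈ cube2 s x ↔ ((s:ℤ) * x.1 ≤ p.1 ∧ p.1 < (s:ℤ) * (x.1 + 1)) ∧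
      ((s:ℤ) * x.2 ≤ p.2 ∧ p.2 < (s:ℤ) * (x.2 + 1)) := by
  simp [cube2, Finset.mem_Ico, Finset.mem_product]

lemma cube2_card {s : ℕ} {x : ℤ × ℤ} : (cube2 s x).card = s ^ 2 := by
  simp only [cube2, Finset.card_product, Int.card_Ico]
  have h : ∀ a : ℤ, (s:ℤ) * (a + 1) - (s:ℤ) * a = (s:ℤ) := by intro a; ring
  rw [h, h]
  simp [sq]

lemma cube2_eq_div {s : ℕ} (hs : 0 < s) {x p : ℤ × ℤ} (hp : p ∈ cube2 s x) :
    x = (p.1 / (s:ℤ), p.2 / (s:ℤ)) := by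
  rw [mem_cube2] at hp
  have hs' : (0:ℤ) < s := by exact_mod_cast hs
  have h1 : x.1 = p.1 / (s:ℤ) := by
    have hle : x.1 ≤ p.1 / (s:ℤ) := (Int.le_ediv_iff_mul_le hs').2 (by linarith [hp.1.1, mul_comm (s:ℤ) x.1])
    have hlt : p.1 / (s:ℤ) < x.1 + 1 := (Int.ediv_lt_iff_lt_mul hs').2 (by linarith [hp.1.2, mul_comm (s:ℤ) (x.1+1)])
    omega
  have h2 : x.2 = p.2 / (s:ℤ) := by
    have hle : x.2 ≤ p.2 / (s:ℤ) := (Int.le_ediv_iff_mul_le hs').2 (by linarith [hp.2.1, mul_comm (s:ℤ) x.2])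
    have hlt : p.2 / (s:ℤ) < x.2 + 1 := (Int.ediv_lt_iff_lt_mul hs').2 (by linarith [hp.2.2, mul_comm (s:ℤ) (x.2+1)])
    omega
  exact Prod.ext h1 h2

lemma mem_cube2_div {s : ℕ} (hs : 0 < s) (p : ℤ × ℤ) :
    p ∈ cube2 s (p.1 / (s:ℤ), p.2 / (s:ℤ)) := by
  have hs' : (0:ℤ) < s := by exact_mod_cast hs
  rw [mem_cube2]
  constructor <;> constructor
  · have := Int.ediv_mul_le p.1 (show (s:ℤ) ≠ 0 by omega); linarith [mul_comm (p.1/(s:ℤ)) (s:ℤ)]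
  · have := Int.lt_ediv_add_one_mul_self p.1 hs'; linarith [mul_comm (p.1/(s:ℤ)+1) (s:ℤ)]
  · have := Int.ediv_mul_le p.2 (show (s:ℤ) ≠ 0 by omega); linarith [mul_comm (p.2/(s:ℤ)) (s:ℤ)]
  · have := Int.lt_ediv_add_one_mul_self p.2 hs'; linarith [mul_comm (p.2/(s:ℤ)+1) (s:ℤ)]

lemma cube2_disjoint {s : ℕ} (hs : 0 < s) {x x' : ℤ × ℤ} (h : x ≠ x') :
    Disjoint (cube2 s x) (cube2 s x') := by
  rw [Finset.disjoint_left]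
  intro p hp hp'
  exact h ((cube2_eq_div hs hp).trans (cube2_eq_div hs hp').symm)

lemma mem_cube2_mul {s m : ℕ} (hs : 0 < s) {y p : ℤ × ℤ} :
    p ∈ cube2 (s * m) y ↔ (p.1 / (s:ℤ), p.2 / (s:ℤ)) ∈ cube2 m y := by
  have hs' : (0:ℤ) < s := by exact_mod_cast hs
  rw [mem_cube2, mem_cube2]
  have key : ∀ (a b : ℤ), (((s:ℤ)*m) * a ≤ b ∧ b < ((s:ℤ)*m) * (a+1)) ↔
      ((m:ℤ) * a ≤ b / (s:ℤ) ∧ b / (s:ℤ) < (m:ℤ) * (a+1)) := by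
    intro a b
    rw [Int.le_ediv_iff_mul_le hs', Int.ediv_lt_iff_lt_mul hs']
    constructor <;> intro ⟨h1, h2⟩ <;> constructor <;> nlinarith
  constructor <;> intro ⟨h1, h2⟩ <;> exact ⟨by have := (key y.1 p.1); push_cast at this ⊢; tauto,
    by have := (key y.2 p.2); push_cast at this ⊢; tauto⟩

lemma cube2_decomp {s m : ℕ} (hs : 0 < s) (y : ℤ × ℤ) :
    cube2 (s * m) y = (cube2 m y).biUnion (fun x => cube2 s x) := by
  ext p
  rw [Finset.mem_biUnion, mem_cube2_mul hs]
  constructor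
  · intro h; exact ⟨_, h, mem_cube2_div hs p⟩
  · rintro ⟨x, hx, hp⟩; rwa [cube2_eq_div hs hp] at hx

open Classical in

lemma ivtN (g : ℤ → Prop) (a : ℤ) :
    ∀ n : ℕ, g a → ¬ g (a + n) → ∃ k : ℕ, k < n ∧ g (a + k) ∧ ¬ g (a + k + 1) := by
  intro n
  induction n with
  | zero => intro h1 h2; simp at h2; exact absurd h1 h2
  | succ n ih =>
    intro h1 h2
    by_cases hn : g (a + n)
    · exact ⟨n, Nat.lt_succ_self n, hn, by push_cast at h2 ⊢; convert h2 using 2; ring⟩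
    · obtain ⟨k, hk, hg⟩ := ih h1 hn
      exact ⟨k, hk.trans (Nat.lt_succ_self n), hg⟩

open Classical in
lemma ivtZ (g : ℤ → Prop) (a b : ℤ) (ha : g a) (hb : ¬ g b) :
    ∃ t t' : ℤ, g t ∧ ¬ g t' ∧ |t - t'| = 1 ∧
      min a b ≤ t ∧ t ≤ max a b ∧ min a b ≤ t' ∧ t' ≤ max a b := by
  rcases le_or_gt a b with hab | hab
  · set n : ℕ := (b - a).toNat with hn
    have hbn : b = a + n := by omega
    obtain ⟨k, hk, h1, h2⟩ := ivtN g a n ha (hbn ▸ hb)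
    refine ⟨a + k, a + k + 1, h1, h2, by simp, ?_, ?_, ?_, ?_⟩ <;> omega
  · set n : ℕ := (a - b).toNat with hn
    have hbn : b = a - n := by omega
    obtain ⟨k, hk, h1, h2⟩ := ivtN (fun t => g (2 * a - t)) a n
      (by show g (2 * a - a); rw [show 2 * a - a = a by ring]; exact ha)
      (by show ¬ g (2 * a - (a + (n:ℤ))); rw [show 2 * a - (a + (n:ℤ)) = a - n by ring]; exact hbn ▸ hb)
    have h1 : g (2 * a - (a + k)) := h1
    have h2 : ¬ g (2 * a - (a + k + 1)) := h2
    refine ⟨2 * a - (a + k), 2 * a - (a + k + 1), h1, h2, ?_, ?_, ?_, ?_, ?_⟩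
    · rw [show 2*a - (a + (k:ℤ)) - (2*a - (a + k + 1)) = 1 by ring]; simp
    all_goals omega

lemma box_switch (P : ℤ × ℤ → Prop) {m : ℕ} {y x₀ x₁ : ℤ × ℤ}
    (h0 : x₀ ∈ cube2 m y) (h1 : x₁ ∈ cube2 m y) (hP0 : P x₀) (hP1 : ¬ P x₁) :
    ∃ x x' : ℤ × ℤ, x ∈ cube2 m y ∧ x' ∈ cube2 m y ∧
      |x.1 - x'.1| + |x.2 - x'.2| = 1 ∧ P x ∧ ¬ P x' := by
  rw [mem_cube2] at h0 h1
  by_cases hmid : P (x₁.1, x₀.2)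
  · obtain ⟨t, t', hg, hg', habs, ht1, ht2, ht1', ht2'⟩ :=
      ivtZ (fun c => P (x₁.1, c)) x₀.2 x₁.2 hmid hP1
    refine ⟨(x₁.1, t), (x₁.1, t'), ?_, ?_, by simpa using habs, hg, hg'⟩ <;>
      rw [mem_cube2] <;>
      exact ⟨⟨h1.1.1, h1.1.2⟩, by constructor <;> simp only [] <;> omega⟩
  · obtain ⟨t, t', hg, hg', habs, ht1, ht2, ht1', ht2'⟩ :=
      ivtZ (fun c => P (c, x₀.2)) x₀.1 x₁.1 hP0 hmid
    refine ⟨(t, x₀.2), (t', x₀.2), ?_, ?_, by simpa using habs, hg, hg'⟩ <;>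
      rw [mem_cube2] <;>
      exact ⟨by constructor <;> simp only [] <;> omega, ⟨h0.2.1, h0.2.2⟩⟩

-- pigeonhole lemmas
open Finset in
lemma sum_card_decomp {s m : ℕ} (hs : 0 < s) (y : ℤ × ℤ) (P : ℤ × ℤ → Prop) [DecidablePred P]
    (hdec : cube2 (s * m) y = (cube2 m y).biUnion (fun x => cube2 s x))
    (hdisj : ∀ x x' : ℤ × ℤ, x ≠ x' → Disjoint (cube2 s x) (cube2 s x')) :
    ((cube2 (s * m) y).filter P).card = ∑ x ∈ cube2 m y, ((cube2 s x).filter P).card := by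
  rw [hdec, Finset.filter_biUnion, Finset.card_biUnion]
  intro x hx x' hx' hne
  exact (hdisj x x' hne).mono (Finset.filter_subset _ _) (Finset.filter_subset _ _)

lemma hat_subset {r ℓ : ℕ} (x : ℤ × ℤ) : hatcube2 r ℓ x ⊆ cube2 (2 ^ (r * ℓ)) x := by
  have ht : 0 ≤ (2:ℤ) ^ (r * ℓ) / 2 ^ r := Int.ediv_nonneg (by positivity) (by positivity)
  apply Finset.product_subset_product <;> apply Finset.Ico_subset_Ico <;> push_cast <;> omega

lemma hat_card {r ℓ : ℕ} (x : ℤ × ℤ) :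
    (hatcube2 r ℓ x).card =
      (((2:ℤ) ^ (r * ℓ) - 2 * ((2:ℤ) ^ (r * ℓ) / 2 ^ r)).toNat) ^ 2 := by
  simp only [hatcube2, Finset.card_product, Int.card_Ico]
  have h : ∀ a : ℤ, (2:ℤ) ^ (r*ℓ) * (a + 1) - 2 ^ (r*ℓ) / 2 ^ r -
      ((2:ℤ) ^ (r*ℓ) * a + 2 ^ (r*ℓ) / 2 ^ r) =
      (2:ℤ) ^ (r*ℓ) - 2 * ((2:ℤ) ^ (r*ℓ) / 2 ^ r) := by intro a; ring
  rw [h, h, sq]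

lemma cube2_card' {s : ℕ} {x : ℤ × ℤ} : (cube2 s x).card = s ^ 2 := by
  simp only [cube2, Finset.card_product, Int.card_Ico]
  have h : ∀ a : ℤ, (s:ℤ) * (a + 1) - (s:ℤ) * a = (s:ℤ) := by intro a; ring
  rw [h, h]; simp [sq]

lemma hat_count {r ℓ : ℕ} (hr : 4 < r) {x : ℤ × ℤ} (P : ℤ × ℤ → Prop) [DecidablePred P]
    (h : (cube2 (2 ^ (r * ℓ)) x).card ≤ 2 * ((cube2 (2 ^ (r * ℓ)) x).filter P).card) :
    ((2:ℤ) ^ (r * ℓ)) ^ 2 ≤ 4 * (((hatcube2 r ℓ x).filter P).card : ℤ) := by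
  set s : ℤ := (2:ℤ) ^ (r * ℓ) with hs
  set t : ℤ := s / 2 ^ r with ht
  have hspos : 0 < s := by positivity
  have ht0 : 0 ≤ t := Int.ediv_nonneg (le_of_lt hspos) (by positivity)
  have htr : 2 ^ r * t ≤ s := by
    have := Int.ediv_mul_le s (show (2:ℤ) ^ r ≠ 0 by positivity)
    linarith [mul_comm ((2:ℤ)^r) t]
  have h32 : (32:ℤ) ≤ 2 ^ r := by
    calc (32:ℤ) = 2 ^ 5 := by norm_num
    _ ≤ 2 ^ r := pow_le_pow_right₀ (by norm_num) (by omega)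
  have h2t : 32 * t ≤ s := le_trans (by nlinarith) htr
  have hst : 0 ≤ s - 2 * t := by nlinarith
  -- cards
  have hcube : ((cube2 (2 ^ (r * ℓ)) x).card : ℤ) = s ^ 2 := by
    rw [cube2_card']; push_cast [hs]; ring
  have hhat : ((hatcube2 r ℓ x).card : ℤ) = (s - 2 * t) ^ 2 := by
    have hst' : 0 ≤ (2:ℤ)^(r*ℓ) - 2 * ((2:ℤ)^(r*ℓ)/2^r) := hst
    rw [hat_card]; push_cast [Int.toNat_of_nonneg hst']; ring
  -- subset relation
  have hsub : (cube2 (2 ^ (r * ℓ)) x).filter P ⊆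
      ((hatcube2 r ℓ x).filter P) ∪ (cube2 (2 ^ (r * ℓ)) x \ hatcube2 r ℓ x) := by
    intro p hp
    rw [Finset.mem_filter] at hp
    by_cases hph : p ∈ hatcube2 r ℓ x
    · exact Finset.mem_union_left _ (Finset.mem_filter.2 ⟨hph, hp.2⟩)
    · exact Finset.mem_union_right _ (Finset.mem_sdiff.2 ⟨hp.1, hph⟩)
  have hd : ((cube2 (2 ^ (r * ℓ)) x \ hatcube2 r ℓ x).card : ℤ) = s ^ 2 - (s - 2*t) ^ 2 := by
    rw [Finset.card_sdiff_of_subset (hat_subset x)]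
    have hle : (hatcube2 r ℓ x).card ≤ (cube2 (2 ^ (r * ℓ)) x).card :=
      Finset.card_le_card (hat_subset x)
    push_cast [Nat.cast_sub hle]
    rw [hcube, hhat]
  have hc1 : ((cube2 (2 ^ (r * ℓ)) x).filter P).card ≤
      ((hatcube2 r ℓ x).filter P).card + (cube2 (2 ^ (r * ℓ)) x \ hatcube2 r ℓ x).card :=
    le_trans (Finset.card_le_card hsub) (Finset.card_union_le _ _)
  -- put into ℤ
  have hc1' : ((cube2 (2 ^ (r * ℓ)) x).filter P).card ≤
      (((hatcube2 r ℓ x).filter P).card : ℤ) + (s ^ 2 - (s - 2*t) ^ 2) := by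
    rw [← hd]; exact_mod_cast hc1
  have hH : s ^ 2 ≤ 2 * (((cube2 (2 ^ (r * ℓ)) x).filter P).card : ℤ) := by
    rw [← hcube]; exact_mod_cast h
  have hdb : 8 * (s ^ 2 - (s - 2*t) ^ 2) ≤ s ^ 2 := by nlinarith
  nlinarith [hc1', hH, hdb]


set_option maxHeartbeats 1000000 in
lemma pair_lb {α : ℝ} (hα : 0 < α) {s : ℕ} (hs : 0 < s) {x x' p q : ℤ × ℤ}
    (hadj : |x.1 - x'.1| + |x.2 - x'.2| = 1)
    (hp : p ∈ cube2 s x) (hq : q ∈ cube2 s x') :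
    (3 * (s:ℝ)) ^ (-α) ≤ Jint2 α p q := by
  have hxx : x ≠ x' := by
    intro h; rw [h] at hadj; simp at hadj
  have hpq : p ≠ q := by
    intro h; exact hxx ((cube2_eq_div hs hp).trans (cube2_eq_div hs (h ▸ hq)).symm)
  have hb1 : |x.1 - x'.1| ≤ 1 := by
    have := abs_nonneg (x.2 - x'.2); omega
  have hb2 : |x.2 - x'.2| ≤ 1 := by
    have := abs_nonneg (x.1 - x'.1); omega
  rw [abs_le] at hb1 hb2
  rw [mem_cube2] at hp hq
  have hs' : (0:ℤ) < s := by exact_mod_cast hs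
  have e1 : p.1 - q.1 < 2 * (s:ℤ) := by
    nlinarith [mul_le_mul_of_nonneg_left hb1.2 hs'.le, hp.1.2, hq.1.1]
  have e2 : -(2 * (s:ℤ)) < p.1 - q.1 := by
    nlinarith [mul_le_mul_of_nonneg_left hb1.1 hs'.le, hp.1.1, hq.1.2]
  have f1 : p.2 - q.2 < 2 * (s:ℤ) := by
    nlinarith [mul_le_mul_of_nonneg_left hb2.2 hs'.le, hp.2.2, hq.2.1]
  have f2 : -(2 * (s:ℤ)) < p.2 - q.2 := by
    nlinarith [mul_le_mul_of_nonneg_left hb2.1 hs'.le, hp.2.1, hq.2.2]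
  have hd1 : (p.1 - q.1)^2 < 4 * (s:ℤ)^2 := by
    have := sq_lt_sq' e2 e1
    calc (p.1 - q.1)^2 < (2*(s:ℤ))^2 := this
    _ = 4 * (s:ℤ)^2 := by ring
  have hd2 : (p.2 - q.2)^2 < 4 * (s:ℤ)^2 := by
    have := sq_lt_sq' f2 f1
    calc (p.2 - q.2)^2 < (2*(s:ℤ))^2 := this
    _ = 4 * (s:ℤ)^2 := by ring
  have hne : p.1 ≠ q.1 ∨ p.2 ≠ q.2 := by
    by_contra h; push_neg at h; exact hpq (Prod.ext h.1 h.2)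
  have hlow : (1:ℤ) ≤ (p.1 - q.1)^2 + (p.2 - q.2)^2 := by
    rcases hne with h | h
    · have h1 : 1 ≤ |p.1 - q.1| := Int.one_le_abs (sub_ne_zero.2 h)
      nlinarith [sq_abs (p.1 - q.1), sq_nonneg (p.2 - q.2)]
    · have h1 : 1 ≤ |p.2 - q.2| := Int.one_le_abs (sub_ne_zero.2 h)
      nlinarith [sq_abs (p.2 - q.2), sq_nonneg (p.1 - q.1)]
  have hup : (p.1 - q.1)^2 + (p.2 - q.2)^2 ≤ 9 * (s:ℤ)^2 := by
    have h9 : (0:ℤ) ≤ (s:ℤ)^2 := sq_nonneg _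
    linarith
  set D : ℝ := ((p.1 - q.1 : ℤ) : ℝ) ^ 2 + ((p.2 - q.2 : ℤ) : ℝ) ^ 2 with hD
  have hlowR : (1:ℝ) ≤ D := by rw [hD]; exact_mod_cast hlow
  have hupR : D ≤ (3 * (s:ℝ))^2 := by
    have : ((p.1 - q.1 : ℤ) : ℝ)^2 + ((p.2 - q.2 : ℤ):ℝ)^2 ≤ 9 * ((s:ℤ):ℝ)^2 := by exact_mod_cast hup
    rw [hD]; push_cast at this ⊢; nlinarith
  have h1 : (1:ℝ) ≤ Real.sqrt D := by
    rw [show (1:ℝ) = Real.sqrt 1 by simp]; exact Real.sqrt_le_sqrt hlowR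
  have h2 : Real.sqrt D ≤ 3 * (s:ℝ) := by
    calc Real.sqrt D ≤ Real.sqrt ((3 * (s:ℝ))^2) := Real.sqrt_le_sqrt hupR
    _ = 3 * (s:ℝ) := Real.sqrt_sq (by positivity)
  unfold Jint2
  exact Real.rpow_le_rpow_of_nonpos (lt_of_lt_of_le one_pos h1) h2 (by linarith)

lemma cell_lb {r ℓ : ℕ} (hr : 4 < r) {α : ℝ} (hα : 0 < α) (A : Finset (ℤ × ℤ)) {x x' : ℤ × ℤ}
    (hadj : |x.1 - x'.1| + |x.2 - x'.2| = 1)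
    (hx : (cube2 (2 ^ (r * ℓ)) x).card ≤ 2 * ((cube2 (2 ^ (r * ℓ)) x).filter (· ∈ A)).card)
    (hx' : 2 * ((cube2 (2 ^ (r * ℓ)) x').filter (· ∈ A)).card < (cube2 (2 ^ (r * ℓ)) x').card) :
    (((2:ℕ)^(r*ℓ) : ℕ) : ℝ)^2/4 * ((((2:ℕ)^(r*ℓ) : ℕ) : ℝ)^2/4) *
      (3 * (((2:ℕ)^(r*ℓ) : ℕ) : ℝ)) ^ (-α) ≤
      ∑ p ∈ (hatcube2 r ℓ x).filter (· ∈ A),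
        ∑ q ∈ (hatcube2 r ℓ x').filter (· ∉ A), Jint2 α p q := by
  set s : ℕ := (2:ℕ)^(r*ℓ) with hsdef
  have hs : 0 < s := by positivity
  set c : ℝ := (3 * (s:ℝ)) ^ (-α) with hc
  have hc0 : 0 ≤ c := Real.rpow_nonneg (by positivity) _
  set Pf := (hatcube2 r ℓ x).filter (· ∈ A) with hPf
  set Qf := (hatcube2 r ℓ x').filter (· ∉ A) with hQf
  -- complement admissibility for x'
  have hcompl : (cube2 s x').card ≤ 2 * ((cube2 s x').filter (· ∉ A)).card := by
    have := Finset.card_filter_add_card_filter_not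
      (s := cube2 s x') (p := (· ∈ A))
    omega
  have hPQ : ∀ p ∈ Pf, ∀ q ∈ Qf, c ≤ Jint2 α p q := by
    intro p hp q hq
    exact pair_lb hα hs hadj (hat_subset x (Finset.mem_filter.1 hp).1)
      (hat_subset x' (Finset.mem_filter.1 hq).1)
  have hinner : ∀ p ∈ Pf, (Qf.card : ℝ) * c ≤ ∑ q ∈ Qf, Jint2 α p q := by
    intro p hp
    have := Finset.card_nsmul_le_sum Qf (fun q => Jint2 α p q) c (fun q hq => hPQ p hp q hq)
    simpa [nsmul_eq_mul] using this
  have houter : (Pf.card : ℝ) * ((Qf.card : ℝ) * c) ≤ ∑ p ∈ Pf, ∑ q ∈ Qf, Jint2 α p q := by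
    have := Finset.card_nsmul_le_sum Pf (fun p => ∑ q ∈ Qf, Jint2 α p q)
      ((Qf.card : ℝ) * c) hinner
    simpa [nsmul_eq_mul] using this
  have hPcard : ((s:ℝ))^2 ≤ 4 * (Pf.card : ℝ) := by
    have h2 := hat_count (ℓ := ℓ) hr (· ∈ A) hx
    have h3 : ((s:ℤ))^2 ≤ 4 * (Pf.card : ℤ) := by push_cast [hsdef]; exact_mod_cast h2
    exact_mod_cast h3
  have hQcard : ((s:ℝ))^2 ≤ 4 * (Qf.card : ℝ) := by
    have h2 := hat_count (ℓ := ℓ) hr (· ∉ A) hcompl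
    have h3 : ((s:ℤ))^2 ≤ 4 * (Qf.card : ℤ) := by push_cast [hsdef]; exact_mod_cast h2
    exact_mod_cast h3
  have hQc : (s:ℝ)^2/4 * c ≤ (Qf.card:ℝ) * c :=
    mul_le_mul_of_nonneg_right (by linarith) hc0
  have hmain : (s:ℝ)^2/4 * ((s:ℝ)^2/4 * c) ≤ (Pf.card:ℝ) * ((Qf.card:ℝ) * c) :=
    mul_le_mul (by linarith) hQc (by positivity) (by positivity)
  calc (s:ℝ)^2/4 * ((s:ℝ)^2/4) * c = (s:ℝ)^2/4 * ((s:ℝ)^2/4 * c) := by ring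
  _ ≤ (Pf.card:ℝ) * ((Qf.card:ℝ) * c) := hmain
  _ ≤ ∑ p ∈ Pf, ∑ q ∈ Qf, Jint2 α p q := houter


def admis (r ℓ : ℕ) (A : Finset (ℤ × ℤ)) (x : ℤ × ℤ) : Prop :=
  (cube2 (2 ^ (r * ℓ)) x).card ≤ 2 * ((cube2 (2 ^ (r * ℓ)) x).filter (· ∈ A)).card

def idx2 (s : ℕ) (p : ℤ × ℤ) : ℤ × ℤ := (p.1 / (s:ℤ), p.2 / (s:ℤ))

lemma mem_cube2_idx2 {s : ℕ} (hs : 0 < s) (p : ℤ × ℤ) : p ∈ cube2 s (idx2 s p) :=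
  mem_cube2_div hs p

lemma mem_Blev {r ℓ : ℕ} {A : Finset (ℤ × ℤ)} {p : ℤ × ℤ} :
    p ∈ Blev r A ℓ ↔ admis r ℓ A (idx2 (2 ^ (r * ℓ)) p) := by
  have hs : 0 < 2 ^ (r * ℓ) := by positivity
  constructor
  · rintro ⟨x, hx, hadm⟩
    rwa [cube2_eq_div hs hx] at hadm
  · intro h
    exact ⟨idx2 (2 ^ (r * ℓ)) p, mem_cube2_idx2 hs p, h⟩

lemma admis_mem_image {r ℓ : ℕ} {A : Finset (ℤ × ℤ)} {x : ℤ × ℤ} (h : admis r ℓ A x) :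
    x ∈ A.image (idx2 (2 ^ (r * ℓ))) := by
  have hs : 0 < 2 ^ (r * ℓ) := by positivity
  have hpos : 0 < ((cube2 (2 ^ (r * ℓ)) x).filter (· ∈ A)).card := by
    have hc : 0 < (cube2 (2 ^ (r * ℓ)) x).card := by
      rw [cube2_card]; positivity
    unfold admis at h; omega
  obtain ⟨q, hq⟩ := Finset.card_pos.1 hpos
  rw [Finset.mem_filter] at hq
  refine Finset.mem_image.2 ⟨q, hq.2, ?_⟩
  have := cube2_eq_div hs hq.1
  rw [idx2, ← this]

lemma card_decomp {s m : ℕ} (hs : 0 < s) (y : ℤ × ℤ) :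
    (cube2 (s * m) y).card = ∑ x ∈ cube2 m y, (cube2 s x).card := by
  rw [cube2_decomp hs, Finset.card_biUnion]
  intro x _ x' _ h
  exact cube2_disjoint hs h

lemma filter_card_decomp {s m : ℕ} (hs : 0 < s) (y : ℤ × ℤ) (A : Finset (ℤ × ℤ)) :
    ((cube2 (s * m) y).filter (· ∈ A)).card =
      ∑ x ∈ cube2 m y, ((cube2 s x).filter (· ∈ A)).card := by
  rw [cube2_decomp hs, Finset.filter_biUnion, Finset.card_biUnion]
  intro x _ x' _ h
  exact (cube2_disjoint hs h).mono (Finset.filter_subset _ _) (Finset.filter_subset _ _)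

lemma pigeonA {r ℓ : ℕ} {A : Finset (ℤ × ℤ)} {y : ℤ × ℤ}
    (h : admis r (ℓ + 1) A y) : ∃ x ∈ cube2 (2 ^ r) y, admis r ℓ A x := by
  have hs : 0 < 2 ^ (r * ℓ) := by positivity
  by_contra hcon
  push_neg at hcon
  have hSm : 2 ^ (r * (ℓ + 1)) = 2 ^ (r * ℓ) * 2 ^ r := by
    rw [← pow_add]; ring_nf
  have hne : (cube2 (2 ^ r) y).Nonempty := by
    rw [← Finset.card_pos, cube2_card]; positivity
  have hlt : 2 * ((cube2 (2 ^ (r * (ℓ + 1))) y).filter (· ∈ A)).card <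
      (cube2 (2 ^ (r * (ℓ + 1))) y).card := by
    rw [hSm, card_decomp hs, filter_card_decomp hs, Finset.mul_sum]
    apply Finset.sum_lt_sum_of_nonempty hne
    intro x hx
    have := hcon x hx
    unfold admis at this; omega
  unfold admis at h; omega

lemma pigeonB {r ℓ : ℕ} {A : Finset (ℤ × ℤ)} {y : ℤ × ℤ}
    (h : ¬ admis r (ℓ + 1) A y) : ∃ x ∈ cube2 (2 ^ r) y, ¬ admis r ℓ A x := by
  have hs : 0 < 2 ^ (r * ℓ) := by positivity
  by_contra hcon
  push_neg at hcon
  have hSm : 2 ^ (r * (ℓ + 1)) = 2 ^ (r * ℓ) * 2 ^ r := by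
    rw [← pow_add]; ring_nf
  apply h
  unfold admis
  rw [hSm, card_decomp hs, filter_card_decomp hs, Finset.mul_sum]
  apply Finset.sum_le_sum
  intro x hx
  have := hcon x hx
  unfold admis at this; omega

lemma bad_cube_pair {r ℓ : ℕ} {A : Finset (ℤ × ℤ)} {p : ℤ × ℤ}
    (hp : p ∈ symmDiff (Blev r A ℓ) (Blev r A (ℓ + 1))) :
    ∃ x x' : ℤ × ℤ, x ∈ cube2 (2 ^ r) (idx2 (2 ^ (r * (ℓ + 1))) p) ∧
      x' ∈ cube2 (2 ^ r) (idx2 (2 ^ (r * (ℓ + 1))) p) ∧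
      |x.1 - x'.1| + |x.2 - x'.2| = 1 ∧ admis r ℓ A x ∧ ¬ admis r ℓ A x' := by
  have hs : 0 < 2 ^ (r * ℓ) := by positivity
  have hS : 0 < 2 ^ (r * (ℓ + 1)) := by positivity
  set y := idx2 (2 ^ (r * (ℓ + 1))) p with hy
  have hSm : 2 ^ (r * (ℓ + 1)) = 2 ^ (r * ℓ) * 2 ^ r := by
    rw [← pow_add]; ring_nf
  have hpy : p ∈ cube2 (2 ^ (r * ℓ) * 2 ^ r) y := by
    rw [← hSm]; exact mem_cube2_idx2 hS p
  have hxp : idx2 (2 ^ (r * ℓ)) p ∈ cube2 (2 ^ r) y := by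
    have := (mem_cube2_mul hs).1 hpy
    exact this
  rw [Set.mem_symmDiff] at hp
  rcases hp with ⟨h1, h2⟩ | ⟨h1, h2⟩
  · -- p ∈ B_ℓ, p ∉ B_{ℓ+1}
    have hadm : admis r ℓ A (idx2 (2 ^ (r * ℓ)) p) := mem_Blev.1 h1
    have hnadm : ¬ admis r (ℓ + 1) A y := fun h => h2 (mem_Blev.2 h)
    obtain ⟨x₁, hx₁, hx₁n⟩ := pigeonB hnadm
    exact box_switch (admis r ℓ A) hxp hx₁ hadm hx₁n
  · -- p ∈ B_{ℓ+1}, p ∉ B_ℓ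
    have hadm : admis r (ℓ + 1) A y := mem_Blev.1 h1
    have hnadm : ¬ admis r ℓ A (idx2 (2 ^ (r * ℓ)) p) := fun h => h2 (mem_Blev.2 h)
    obtain ⟨x₀, hx₀, hx₀a⟩ := pigeonA hadm
    exact box_switch (admis r ℓ A) hx₀ hxp hx₀a hnadm

lemma Blev_finite (r ℓ : ℕ) (A : Finset (ℤ × ℤ)) : (Blev r A ℓ).Finite := by
  have hs : 0 < 2 ^ (r * ℓ) := by positivity
  apply Set.Finite.subset
    (Finset.finite_toSet ((A.image (idx2 (2 ^ (r * ℓ)))).biUnion (cube2 (2 ^ (r * ℓ)))))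
  intro p hp
  have h := mem_Blev.1 hp
  simp only [Finset.coe_biUnion, Set.mem_iUnion, Finset.mem_coe]
  exact ⟨idx2 (2 ^ (r * ℓ)) p, admis_mem_image h, mem_cube2_idx2 hs p⟩

theorem stmt13 (r : ℕ) (hr : 4 < r) (α : ℝ) (hα1 : 2 < α) (hα2 : α ≤ 3)
    (A : Finset (ℤ × ℤ)) (ℓ : ℕ) :
    ((symmDiff (Blev r A ℓ) (Blev r A (ℓ + 1))).ncard : ℝ) ≤
      (16 * 3 ^ α * (2 : ℝ) ^ (2 * r + 1)) *
        (2 : ℝ) ^ (((r * ℓ : ℕ) : ℝ) * (α - 2)) * Qlev r α A ℓ := by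
  have hα0 : 0 < α := by linarith
  set s : ℕ := 2 ^ (r * ℓ) with hsdef
  set S : ℕ := 2 ^ (r * (ℓ + 1)) with hSdef
  have hs : 0 < s := by positivity
  have hS : 0 < S := by positivity
  have hs0 : (0:ℝ) < (s:ℝ) := by positivity
  have hSm : S = s * 2 ^ r := by rw [hsdef, hSdef, ← pow_add]; ring_nf
  set D := symmDiff (Blev r A ℓ) (Blev r A (ℓ + 1)) with hD
  have hDfin : D.Finite := by
    apply Set.Finite.subset ((Blev_finite r ℓ A).union (Blev_finite r (ℓ + 1) A))
    rw [hD]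
    exact symmDiff_le_sup
  set F := hDfin.toFinset with hF
  set T := F.image (idx2 S) with hT
  -- covering bound
  have hncard : D.ncard ≤ T.card * S ^ 2 := by
    have hcover : D ⊆ ↑(T.biUnion (cube2 S)) := by
      intro p hp
      simp only [Finset.coe_biUnion, Set.mem_iUnion, Finset.mem_coe]
      exact ⟨idx2 S p, Finset.mem_image.2 ⟨p, hDfin.mem_toFinset.2 hp, rfl⟩,
        mem_cube2_idx2 hS p⟩
    calc D.ncard ≤ (↑(T.biUnion (cube2 S)) : Set (ℤ × ℤ)).ncard :=
          Set.ncard_le_ncard hcover (Finset.finite_toSet _)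
    _ = (T.biUnion (cube2 S)).card := Set.ncard_coe_finset _
    _ ≤ ∑ y ∈ T, (cube2 S y).card := Finset.card_biUnion_le
    _ = T.card * S ^ 2 := by
        rw [Finset.sum_congr rfl (fun y _ => cube2_card (s := S) (x := y)),
          Finset.sum_const, smul_eq_mul]
  -- choose boundary pairs
  have hTpair : ∀ y ∈ T, ∃ xx : (ℤ × ℤ) × (ℤ × ℤ), xx.1 ∈ cube2 (2 ^ r) y ∧
      xx.2 ∈ cube2 (2 ^ r) y ∧ |xx.1.1 - xx.2.1| + |xx.1.2 - xx.2.2| = 1 ∧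
      admis r ℓ A xx.1 ∧ ¬ admis r ℓ A xx.2 := by
    intro y hy
    rw [hT, Finset.mem_image] at hy
    obtain ⟨p, hpF, rfl⟩ := hy
    obtain ⟨x, x', h1, h2, h3, h4, h5⟩ := bad_cube_pair (hDfin.mem_toFinset.1 hpF)
    exact ⟨(x, x'), h1, h2, h3, h4, h5⟩
  choose pr hpr1 hpr2 hpr3 hpr4 hpr5 using hTpair
  -- the summand of Qlev
  set g : ℤ × ℤ → ℤ × ℤ → ℝ := fun x x' =>
    if |x.1 - x'.1| + |x.2 - x'.2| = 1 ∧
        (cube2 (2 ^ (r * ℓ)) x).card ≤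
          2 * ((cube2 (2 ^ (r * ℓ)) x).filter (· ∈ A)).card ∧
        2 * ((cube2 (2 ^ (r * ℓ)) x').filter (· ∈ A)).card <
          (cube2 (2 ^ (r * ℓ)) x').card
    then ∑ p ∈ (hatcube2 r ℓ x).filter (· ∈ A),
           ∑ q ∈ (hatcube2 r ℓ x').filter (· ∉ A), Jint2 α p q
    else 0 with hg
  have hQ : Qlev r α A ℓ = ∑' x : ℤ × ℤ, ∑' x' : ℤ × ℤ, g x x' := rfl
  have hg0 : ∀ x x', 0 ≤ g x x' := by
    intro x x'
    rw [hg]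
    dsimp only
    split
    · apply Finset.sum_nonneg
      intro p _
      apply Finset.sum_nonneg
      intro q _
      exact Real.rpow_nonneg (Real.sqrt_nonneg _) _
    · exact le_refl 0
  have hgsum : ∀ x, Summable (g x) := by
    intro x
    apply summable_of_ne_finset_zero
      (s := {(x.1 + 1, x.2), (x.1 - 1, x.2), (x.1, x.2 + 1), (x.1, x.2 - 1)})
    intro x' hx'
    rw [hg]
    dsimp only
    rw [if_neg]
    rintro ⟨habs, -⟩
    apply hx'
    simp only [Finset.mem_insert, Finset.mem_singleton]
    have hd : (x'.1 = x.1 + 1 ∧ x'.2 = x.2) ∨ (x'.1 = x.1 - 1 ∧ x'.2 = x.2) ∨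
        (x'.1 = x.1 ∧ x'.2 = x.2 + 1) ∨ (x'.1 = x.1 ∧ x'.2 = x.2 - 1) := by
      rcases abs_cases (x.1 - x'.1) with ⟨e1, _⟩ | ⟨e1, _⟩ <;>
        rcases abs_cases (x.2 - x'.2) with ⟨e2, _⟩ | ⟨e2, _⟩ <;> omega
    rcases hd with ⟨a, b⟩ | ⟨a, b⟩ | ⟨a, b⟩ | ⟨a, b⟩
    · exact Or.inl (Prod.ext a b)
    · exact Or.inr (Or.inl (Prod.ext a b))
    · exact Or.inr (Or.inr (Or.inl (Prod.ext a b)))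
    · exact Or.inr (Or.inr (Or.inr (Prod.ext a b)))
  have hFs : ∀ x, 0 ≤ ∑' x', g x x' := fun x => tsum_nonneg (hg0 x)
  have hFsupp : ∀ x ∉ A.image (idx2 s), (∑' x', g x x') = 0 := by
    intro x hx
    have hz : ∀ x', g x x' = 0 := by
      intro x'
      rw [hg]
      dsimp only
      rw [if_neg]
      rintro ⟨-, hadm, -⟩
      exact hx (admis_mem_image hadm)
    simp only [hz, tsum_zero]
  have hFsummable : Summable (fun x => ∑' x', g x x') :=
    summable_of_ne_finset_zero hFsupp
  -- lower bound constant
  set c0 : ℝ := ((s:ℕ):ℝ) ^ 2 / 4 * (((s:ℕ):ℝ) ^ 2 / 4) * (3 * ((s:ℕ):ℝ)) ^ (-α) with hc0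
  have hc00 : 0 ≤ c0 := by
    rw [hc0]
    positivity
  set X : Finset (ℤ × ℤ) := T.attach.image (fun y => (pr y.1 y.2).1) with hX
  have hXcard : X.card = T.card := by
    rw [hX, Finset.card_image_of_injOn, Finset.card_attach]
    intro y1 _ y2 _ heq
    have h2r : 0 < 2 ^ r := by positivity
    have e1 := cube2_eq_div h2r (hpr1 y1.1 y1.2)
    have e2 := cube2_eq_div h2r (hpr1 y2.1 y2.2)
    have heq' : (pr y1.1 y1.2).1 = (pr y2.1 y2.2).1 := heq
    apply Subtype.ext
    rw [e1, e2, heq']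
  have hXlb : ∀ x ∈ X, c0 ≤ ∑' x', g x x' := by
    intro x hx
    rw [hX, Finset.mem_image] at hx
    obtain ⟨y, -, rfl⟩ := hx
    have hlt : 2 * ((cube2 (2 ^ (r * ℓ)) (pr y.1 y.2).2).filter (· ∈ A)).card <
        (cube2 (2 ^ (r * ℓ)) (pr y.1 y.2).2).card := by
      have h5 := hpr5 y.1 y.2
      unfold admis at h5
      omega
    have hcell := cell_lb hr hα0 A (hpr3 y.1 y.2) (hpr4 y.1 y.2) hlt
    calc c0 ≤ g (pr y.1 y.2).1 (pr y.1 y.2).2 := by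
          rw [hg]
          dsimp only
          rw [if_pos ⟨hpr3 y.1 y.2, hpr4 y.1 y.2, hlt⟩]
          exact hcell
    _ ≤ ∑' x', g (pr y.1 y.2).1 x' :=
        Summable.le_tsum (hgsum _) _ (fun j _ => hg0 _ j)
  have hQge : (T.card : ℝ) * c0 ≤ Qlev r α A ℓ := by
    rw [hQ]
    have h1 : (X.card : ℝ) * c0 ≤ ∑ x ∈ X, ∑' x', g x x' := by
      have := Finset.card_nsmul_le_sum X (fun x => ∑' x', g x x') c0 hXlb
      simpa [nsmul_eq_mul] using this
    have h2 : ∑ x ∈ X, ∑' x', g x x' ≤ ∑' x, ∑' x', g x x' :=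
      Summable.sum_le_tsum X (fun i _ => hFs i) hFsummable
    rw [← hXcard]
    linarith
  -- arithmetic
  have e2 : (2:ℝ) ^ (((r * ℓ : ℕ) : ℝ) * (α - 2)) = ((s:ℕ):ℝ) ^ (α - 2) := by
    rw [Real.rpow_mul (by norm_num : (0:ℝ) ≤ 2), Real.rpow_natCast]
    congr 1
    rw [hsdef]
    push_cast
    ring
  have e1 : (3 * ((s:ℕ):ℝ)) ^ (-α) = (3:ℝ) ^ (-α) * ((s:ℕ):ℝ) ^ (-α) :=
    Real.mul_rpow (by norm_num) (by positivity)
  have hab : (3:ℝ) ^ α * (3:ℝ) ^ (-α) = 1 := by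
    rw [← Real.rpow_add (by norm_num : (0:ℝ) < 3)]
    simp
  have hinv : ((s:ℕ):ℝ) ^ (α - 2) * ((s:ℕ):ℝ) ^ (-α) = (((s:ℕ):ℝ) ^ 2)⁻¹ := by
    rw [← Real.rpow_add hs0, show α - 2 + -α = -2 by ring,
      show (-2:ℝ) = -((2:ℕ):ℝ) by norm_num, Real.rpow_neg hs0.le, Real.rpow_natCast]
  have hR : 16 * (3:ℝ) ^ α * 2 ^ (2 * r + 1) * ((s:ℕ):ℝ) ^ (α - 2) *
      (((s:ℕ):ℝ) ^ 2 / 4 * (((s:ℕ):ℝ) ^ 2 / 4) * ((3:ℝ) ^ (-α) * ((s:ℕ):ℝ) ^ (-α))) =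
      2 ^ (2 * r + 1) * ((s:ℕ):ℝ) ^ 2 := by
    have hss : (((s:ℕ):ℝ) ^ 2) ≠ 0 := by positivity
    calc 16 * (3:ℝ) ^ α * 2 ^ (2 * r + 1) * ((s:ℕ):ℝ) ^ (α - 2) *
        (((s:ℕ):ℝ) ^ 2 / 4 * (((s:ℕ):ℝ) ^ 2 / 4) * ((3:ℝ) ^ (-α) * ((s:ℕ):ℝ) ^ (-α))) =
        ((3:ℝ) ^ α * (3:ℝ) ^ (-α)) *
          ((((s:ℕ):ℝ) ^ (α - 2) * ((s:ℕ):ℝ) ^ (-α)) * (((s:ℕ):ℝ) ^ 2 * ((s:ℕ):ℝ) ^ 2)) *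
          2 ^ (2 * r + 1) := by ring
    _ = 1 * ((((s:ℕ):ℝ) ^ 2)⁻¹ * (((s:ℕ):ℝ) ^ 2 * ((s:ℕ):ℝ) ^ 2)) * 2 ^ (2 * r + 1) := by
        rw [hab, hinv]
    _ = 2 ^ (2 * r + 1) * ((s:ℕ):ℝ) ^ 2 := by
        field_simp
  have hK : ((S:ℕ):ℝ) ^ 2 ≤
      16 * 3 ^ α * (2:ℝ) ^ (2 * r + 1) * (2:ℝ) ^ (((r * ℓ : ℕ) : ℝ) * (α - 2)) * c0 := by
    rw [hc0, e2, e1]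
    calc ((S:ℕ):ℝ) ^ 2 = (2:ℝ) ^ (2 * r) * ((s:ℕ):ℝ) ^ 2 := by
          rw [hSm]
          push_cast
          rw [show 2 * r = r * 2 by ring, pow_mul]
          ring
    _ ≤ (2:ℝ) ^ (2 * r + 1) * ((s:ℕ):ℝ) ^ 2 := by
        have : (2:ℝ) ^ (2 * r) ≤ (2:ℝ) ^ (2 * r + 1) :=
          pow_le_pow_right₀ (by norm_num) (by omega)
        have h2 : (0:ℝ) ≤ ((s:ℕ):ℝ) ^ 2 := by positivity
        nlinarith
    _ = 16 * 3 ^ α * (2:ℝ) ^ (2 * r + 1) * ((s:ℕ):ℝ) ^ (α - 2) *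
        (((s:ℕ):ℝ) ^ 2 / 4 * (((s:ℕ):ℝ) ^ 2 / 4) *
          ((3:ℝ) ^ (-α) * ((s:ℕ):ℝ) ^ (-α))) := hR.symm
  -- final chain
  have hcast : (D.ncard : ℝ) ≤ (T.card : ℝ) * ((S:ℕ):ℝ) ^ 2 := by
    exact_mod_cast hncard
  calc (D.ncard : ℝ) ≤ (T.card : ℝ) * ((S:ℕ):ℝ) ^ 2 := hcast
  _ ≤ (T.card : ℝ) *
      (16 * 3 ^ α * (2:ℝ) ^ (2 * r + 1) * (2:ℝ) ^ (((r * ℓ : ℕ) : ℝ) * (α - 2)) * c0) :=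
      mul_le_mul_of_nonneg_left hK (Nat.cast_nonneg _)
  _ = 16 * 3 ^ α * (2:ℝ) ^ (2 * r + 1) * (2:ℝ) ^ (((r * ℓ : ℕ) : ℝ) * (α - 2)) *
      ((T.card : ℝ) * c0) := by ring
  _ ≤ 16 * 3 ^ α * (2:ℝ) ^ (2 * r + 1) * (2:ℝ) ^ (((r * ℓ : ℕ) : ℝ) * (α - 2)) *
      Qlev r α A ℓ := by
      apply mul_le_mul_of_nonneg_left hQge
      positivity
end

section
/- Let 1 < α < 2 and fix M_ℓ = M₀·2^{δℓ} with M₀ > 2 and δ > 0. Suppose the ℓ-interval B = [b, b + 2^ℓ) ∩ ℤ is plus favored with respect to σ : ℤ → {-1,+1}, i.e., (I) σ_y = 1 for all y with 1 ≤ d(y, B) ≤ 2^{ℓ-1}, and (II) for each 1 ≤ k ≤ M_ℓ, the translates I_ℓ(x ± 16k) (where B = I_ℓ(x)) each contain at most 2^ℓ/M_ℓ minus spins. Then for every integer 0 < p ≤ M_ℓ·2^ℓ, the number of plus spins of σ in [b + 2^ℓ, b + 2^ℓ + p) ∩ ℤ is at least (1 − 2/M_ℓ)·p, and similarly in [b −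 p, b) ∩ ℤ. -/
lemma arith16 (N : ℝ) (hN : 2 < N) (L : ℕ) (hL : 0 < L)
    (f : ℕ → ℕ) (hmono : ∀ a c : ℕ, a ≤ c → f a ≤ f c)
    (hadd : ∀ a d : ℕ, f (a + d) ≤ f a + d)
    (hchunk : ∀ K : ℕ, (K : ℝ) ≤ N → (f (L * K) : ℝ) ≤ K * ((L : ℝ) / N))
    (p : ℕ) (hp : (p : ℝ) ≤ N * L) (hLp : L < 2 * p) :
    (f p : ℝ) ≤ 2 * p / N := by
  have hN0 : (0:ℝ) < N := by linarith
  have hL0 : (0:ℝ) < L := by exact_mod_cast hL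
  obtain ⟨q, r, hrL, hpqr⟩ : ∃ q r, r < L ∧ p = L * q + r :=
    ⟨p / L, p % L, Nat.mod_lt _ hL, (Nat.div_add_mod p L).symm⟩
  have hLq : (L : ℝ) * q ≤ p := by
    have : L * q ≤ p := by
      rw [hpqr]; exact Nat.le_add_right _ _
    exact_mod_cast this
  have hqN : (q : ℝ) ≤ N := by
    by_contra h
    push_neg at h
    nlinarith
  have hpR : (p : ℝ) = L * q + r := by exact_mod_cast hpqr
  have hrR : (r : ℝ) < L := by exact_mod_cast hrL
  have hp0 : (0:ℝ) ≤ p := by positivity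
  rcases Nat.eq_zero_or_pos r with hr0 | hr0
  · have hpe : p = L * q := by omega
    have h1 := hchunk q hqN
    rw [hpe] at *
    calc (f (L*q) : ℝ) ≤ q * ((L:ℝ)/N) := h1
      _ = ((L:ℝ) * q) / N := by ring
      _ ≤ 2 * (↑(L*q)) / N := by
          push_cast
          gcongr ?_ / N
          nlinarith
  · have hr0R : (0:ℝ) < r := by exact_mod_cast hr0
    by_cases hq1 : ((q:ℝ) + 1) ≤ N
    · have hle : p ≤ L * (q + 1) := by
        rw [hpqr, Nat.mul_succ]
        exact Nat.add_le_add_left hrL.le _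
      have h1 : (f p : ℝ) ≤ (f (L * (q+1)) : ℝ) := by
        exact_mod_cast hmono _ _ hle
      have h2 := hchunk (q+1) (by push_cast; linarith)
      have key : ((q:ℝ)+1) * L ≤ 2 * p := by
        rcases Nat.eq_zero_or_pos q with h0 | h0
        · subst h0
          have : (L : ℝ) < 2 * p := by exact_mod_cast hLp
          simpa using this.le
        · have h0R : (1:ℝ) ≤ q := by exact_mod_cast h0
          nlinarith
      calc (f p : ℝ) ≤ ((q:ℝ)+1) * ((L:ℝ)/N) := by push_cast at h2 ⊢; linarith
        _ = (((q:ℝ)+1) * L) / N := by ring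
        _ ≤ 2 * p / N := by gcongr ?_ / N
    · push_neg at hq1
      have hq2 : (2:ℝ) ≤ q := by
        have h1 : (1:ℝ) < q := by linarith
        have h2 : 1 < q := by exact_mod_cast h1
        exact_mod_cast h2
      have h1 : f p ≤ f (L * q) + r := by rw [hpqr]; exact hadd _ _
      have h2 := hchunk q hqN
      have h3 : (f p : ℝ) ≤ (q:ℝ) * ((L:ℝ)/N) + r := by
        have : (f p : ℝ) ≤ (f (L*q) : ℝ) + r := by exact_mod_cast h1
        linarith
      have key : (q:ℝ) * ((L:ℝ)/N) + r ≤ 2 * p / N := by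
        rw [show (q:ℝ) * ((L:ℝ)/N) = ((q:ℝ)*L)/N by ring,
            show (r:ℝ) = ((r:ℝ)*N)/N by field_simp, ← add_div]
        gcongr ?_ / N
        nlinarith [mul_nonneg (le_of_lt hr0R) (by linarith : (0:ℝ) ≤ (q:ℝ) + 1 - N),
          mul_nonneg (by linarith : (0:ℝ) ≤ (q:ℝ)) (by linarith : (0:ℝ) ≤ (L:ℝ) - r)]
      linarith

theorem stmt16 (α : ℝ) (hα1 : 1 < α) (hα2 : α < 2)
    (M₀ δ : ℝ) (hM₀ : 2 < M₀) (hδ : 0 < δ)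
    (ℓ : ℕ) (σ : ℤ → ℤ) (hσ : ∀ z, σ z = 1 ∨ σ z = -1) (b : ℤ)
    (hI : ∀ y : ℤ,
      ((1 ≤ b - y ∧ b - y ≤ (2 ^ ℓ : ℤ) / 2) ∨
        (b + 2 ^ ℓ ≤ y ∧ y - (b + 2 ^ ℓ - 1) ≤ (2 ^ ℓ : ℤ) / 2)) → σ y = 1)
    (hII : ∀ k : ℤ, 1 ≤ |k| → (|k| : ℝ) ≤ M₀ * 2 ^ (δ * (ℓ : ℝ)) →
      (((Finset.Ico (b + 2 ^ ℓ * k) (b + 2 ^ ℓ * (k + 1))).filter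
          (fun z => σ z = -1)).card : ℝ) ≤
        (2 : ℝ) ^ ℓ / (M₀ * 2 ^ (δ * (ℓ : ℝ)))) :
    ∀ p : ℕ, 0 < p → (p : ℝ) ≤ M₀ * 2 ^ (δ * (ℓ : ℝ)) * 2 ^ ℓ →
      (1 - 2 / (M₀ * 2 ^ (δ * (ℓ : ℝ)))) * p ≤
        (((Finset.Ico (b + 2 ^ ℓ) (b + 2 ^ ℓ + p)).filter
            (fun z => σ z = 1)).card : ℝ) ∧
      (1 - 2 / (M₀ * 2 ^ (δ * (ℓ : ℝ)))) * p ≤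
        (((Finset.Ico (b - p) b).filter (fun z => σ z = 1)).card : ℝ) := by
  set N : ℝ := M₀ * 2 ^ (δ * (ℓ : ℝ)) with hNdef
  have hN : 2 < N := by
    have h1 : (1:ℝ) ≤ 2 ^ (δ * (ℓ : ℝ)) := by
      apply Real.one_le_rpow one_le_two (by positivity)
    nlinarith
  have hN0 : (0:ℝ) < N := by linarith
  have hLposZ : (0:ℤ) < 2 ^ ℓ := by positivity
  intro p hp0 hpM
  -- counting: plus + minus = card, in any finset
  have hsplitcard : ∀ S : Finset ℤ,
      (S.filter (fun z => σ z = 1)).card + (S.filter (fun z => σ z = -1)).card = S.card := by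
    intro S
    have he : S.filter (fun z => σ z = -1) = S.filter (fun z => ¬ σ z = 1) := by
      apply Finset.filter_congr
      intro z _
      rcases hσ z with h | h <;> simp [h]
    rw [he, Finset.card_filter_add_card_filter_not]
  -- chunk bounds on the right
  have chunkR : ∀ K : ℕ, (K : ℝ) ≤ N →
      (((Finset.Ico (b + 2 ^ ℓ) (b + 2 ^ ℓ * ((K:ℤ) + 1))).filter
        (fun z => σ z = -1)).card : ℝ) ≤ K * ((2:ℝ) ^ ℓ / N) := by
    intro K
    induction K with
    | zero => intro _; simp
    | succ n ih =>
      intro hK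
      have hn : (n:ℝ) ≤ N := by push_cast at hK; linarith
      have h1 : b + 2 ^ ℓ ≤ b + 2 ^ ℓ * ((n:ℤ) + 1) := by nlinarith [Int.natCast_nonneg n]
      have h2 : b + 2 ^ ℓ * ((n:ℤ) + 1) ≤ b + 2 ^ ℓ * (((n:ℕ)+1:ℕ) + 1 : ℤ) := by
        push_cast; nlinarith
      have hsub : Finset.Ico (b + 2 ^ ℓ) (b + 2 ^ ℓ * (((n:ℕ)+1:ℕ) + 1 : ℤ)) =
          Finset.Ico (b + 2 ^ ℓ) (b + 2 ^ ℓ * ((n:ℤ) + 1)) ∪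
          Finset.Ico (b + 2 ^ ℓ * ((n:ℤ) + 1)) (b + 2 ^ ℓ * (((n:ℤ) + 1) + 1)) := by
        rw [Finset.Ico_union_Ico_eq_Ico h1 (by push_cast at h2 ⊢; linarith)]
        congr 1 <;> try (push_cast; ring)
      have hK' : (n:ℝ) + 1 ≤ N := by push_cast at hK; linarith
      have hIIn := hII ((n:ℤ) + 1)
        (by rw [abs_of_nonneg (by positivity : (0:ℤ) ≤ (n:ℤ) + 1)]; omega)
        (by push_cast
            rw [abs_of_nonneg (by positivity : (0:ℝ) ≤ (n:ℝ) + 1)]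
            linarith)
      calc ((((Finset.Ico (b + 2 ^ ℓ) (b + 2 ^ ℓ * (((n:ℕ)+1:ℕ) + 1 : ℤ))).filter
              (fun z => σ z = -1)).card : ℕ) : ℝ)
          ≤ (((Finset.Ico (b + 2 ^ ℓ) (b + 2 ^ ℓ * ((n:ℤ) + 1))).filter
              (fun z => σ z = -1)).card : ℝ) +
            (((Finset.Ico (b + 2 ^ ℓ * ((n:ℤ) + 1)) (b + 2 ^ ℓ * (((n:ℤ) + 1) + 1))).filter
              (fun z => σ z = -1)).card : ℝ) := by
              rw [hsub, Finset.filter_union]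
              exact_mod_cast Finset.card_union_le _ _
        _ ≤ n * ((2:ℝ) ^ ℓ / N) + (2:ℝ) ^ ℓ / N := add_le_add (ih hn) hIIn
        _ = ((n:ℕ)+1:ℕ) * ((2:ℝ) ^ ℓ / N) := by push_cast; ring
  -- chunk bounds on the left
  have chunkL : ∀ K : ℕ, (K : ℝ) ≤ N →
      (((Finset.Ico (b - 2 ^ ℓ * (K:ℤ)) b).filter
        (fun z => σ z = -1)).card : ℝ) ≤ K * ((2:ℝ) ^ ℓ / N) := by
    intro K
    induction K with
    | zero => intro _; simp
    | succ n ih =>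
      intro hK
      have hn : (n:ℝ) ≤ N := by push_cast at hK; linarith
      have h1 : b - 2 ^ ℓ * (((n:ℕ)+1:ℕ) : ℤ) ≤ b - 2 ^ ℓ * (n:ℤ) := by
        push_cast; nlinarith
      have h2 : b - 2 ^ ℓ * (n:ℤ) ≤ b := by nlinarith [Int.natCast_nonneg n]
      have hsub : Finset.Ico (b - 2 ^ ℓ * (((n:ℕ)+1:ℕ) : ℤ)) b =
          Finset.Ico (b - 2 ^ ℓ * (((n:ℕ)+1:ℕ) : ℤ)) (b - 2 ^ ℓ * (n:ℤ)) ∪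
          Finset.Ico (b - 2 ^ ℓ * (n:ℤ)) b := by
        rw [Finset.Ico_union_Ico_eq_Ico h1 h2]
      have hK' : (n:ℝ) + 1 ≤ N := by push_cast at hK; linarith
      have hIIn := hII (-((n:ℤ) + 1))
        (by rw [abs_neg, abs_of_nonneg (by positivity : (0:ℤ) ≤ (n:ℤ) + 1)]; omega)
        (by push_cast
            rw [abs_neg, abs_of_nonneg (by positivity : (0:ℝ) ≤ (n:ℝ) + 1)]
            linarith)
      have heq : Finset.Ico (b + 2 ^ ℓ * (-((n:ℤ) + 1))) (b + 2 ^ ℓ * (-((n:ℤ) + 1) + 1)) =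
          Finset.Ico (b - 2 ^ ℓ * (((n:ℕ)+1:ℕ) : ℤ)) (b - 2 ^ ℓ * (n:ℤ)) := by
        congr 1 <;> push_cast <;> ring
      rw [heq] at hIIn
      calc ((((Finset.Ico (b - 2 ^ ℓ * (((n:ℕ)+1:ℕ) : ℤ)) b).filter
              (fun z => σ z = -1)).card : ℕ) : ℝ)
          ≤ (((Finset.Ico (b - 2 ^ ℓ * (((n:ℕ)+1:ℕ) : ℤ)) (b - 2 ^ ℓ * (n:ℤ))).filter
              (fun z => σ z = -1)).card : ℝ) +
            (((Finset.Ico (b - 2 ^ ℓ * (n:ℤ)) b).filter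
              (fun z => σ z = -1)).card : ℝ) := by
              rw [hsub, Finset.filter_union]
              exact_mod_cast Finset.card_union_le _ _
        _ ≤ (2:ℝ) ^ ℓ / N + n * ((2:ℝ) ^ ℓ / N) := add_le_add hIIn (ih hn)
        _ = ((n:ℕ)+1:ℕ) * ((2:ℝ) ^ ℓ / N) := by push_cast; ring
  rcases le_or_gt (p : ℤ) ((2 ^ ℓ : ℤ) / 2) with hcase | hcase
  · -- small p : everything is a plus spin by (I)
    have goalbound : ∀ S : Finset ℤ, S.card = p → (∀ z ∈ S, σ z = 1) →
        (1 - 2 / N) * p ≤ ((S.filter (fun z => σ z = 1)).card : ℝ) := by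
      intro S hcard hall
      rw [Finset.filter_true_of_mem hall, hcard]
      have : (0:ℝ) < 2 / N := by positivity
      nlinarith [(show (0:ℝ) < p by exact_mod_cast hp0)]
    constructor
    · apply goalbound
      · rw [Int.card_Ico]; simp
      · intro z hz
        simp only [Finset.mem_Ico] at hz
        exact hI z (Or.inr ⟨hz.1, by omega⟩)
    · apply goalbound
      · rw [Int.card_Ico]; simp
      · intro z hz
        simp only [Finset.mem_Ico] at hz
        exact hI z (Or.inl ⟨by omega, by omega⟩)
  · -- large p : use the chunk covering through arith16
    have hLp : 2 ^ ℓ < 2 * p := by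
      have hA : (2:ℤ) ^ ℓ ≤ 2 * ((2 ^ ℓ : ℤ) / 2) + 1 := by omega
      have : (2:ℤ) ^ ℓ < 2 * (p:ℤ) := by omega
      exact_mod_cast this
    have hpN : (p : ℝ) ≤ N * ((2 ^ ℓ : ℕ) : ℝ) := by push_cast; linarith [hpM]
    have key : ∀ S : Finset ℤ, S.card = p →
        ((S.filter (fun z => σ z = -1)).card : ℝ) ≤ 2 * p / N →
        (1 - 2 / N) * p ≤ ((S.filter (fun z => σ z = 1)).card : ℝ) := by
      intro S hcard hminus
      have hsum := hsplitcard S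
      rw [hcard] at hsum
      have hsumR : ((S.filter (fun z => σ z = 1)).card : ℝ) +
          ((S.filter (fun z => σ z = -1)).card : ℝ) = p := by exact_mod_cast hsum
      have : (2:ℝ) * p / N = (2 / N) * p := by ring
      linarith
    constructor
    · apply key _ (by rw [Int.card_Ico]; simp)
      have := arith16 N hN (2 ^ ℓ) (by positivity)
        (fun n => ((Finset.Ico (b + 2 ^ ℓ) (b + 2 ^ ℓ + (n:ℤ))).filter (fun z => σ z = -1)).card)
        (by
          intro a c hac
          apply Finset.card_le_card
          apply Finset.filter_subset_filter
          apply Finset.Ico_subset_Ico_right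
          omega)
        (by
          intro a d
          have hsub : Finset.Ico (b + 2 ^ ℓ) (b + 2 ^ ℓ + ((a + d : ℕ) : ℤ)) =
              Finset.Ico (b + 2 ^ ℓ) (b + 2 ^ ℓ + (a:ℤ)) ∪
              Finset.Ico (b + 2 ^ ℓ + (a:ℤ)) (b + 2 ^ ℓ + (a:ℤ) + (d:ℤ)) := by
            rw [Finset.Ico_union_Ico_eq_Ico (by omega) (by omega)]
            congr 1; push_cast; ring
          rw [hsub, Finset.filter_union]
          have h1 := Finset.card_union_le
            ((Finset.Ico (b + 2 ^ ℓ) (b + 2 ^ ℓ + (a:ℤ))).filter (fun z => σ z = -1))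
            ((Finset.Ico (b + 2 ^ ℓ + (a:ℤ)) (b + 2 ^ ℓ + (a:ℤ) + (d:ℤ))).filter
              (fun z => σ z = -1))
          have h2 : ((Finset.Ico (b + 2 ^ ℓ + (a:ℤ)) (b + 2 ^ ℓ + (a:ℤ) + (d:ℤ))).filter
              (fun z => σ z = -1)).card ≤ d := by
            refine le_trans (Finset.card_filter_le _ _) ?_
            rw [Int.card_Ico]; omega
          omega)
        (by
          intro K hK
          have heq : b + 2 ^ ℓ + ((2 ^ ℓ * K : ℕ) : ℤ) = b + 2 ^ ℓ * ((K:ℤ) + 1) := by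
            push_cast; ring
          rw [heq]
          exact_mod_cast chunkR K hK)
        p hpN hLp
      exact_mod_cast this
    · apply key _ (by rw [Int.card_Ico]; simp)
      have := arith16 N hN (2 ^ ℓ) (by positivity)
        (fun n => ((Finset.Ico (b - (n:ℤ)) b).filter (fun z => σ z = -1)).card)
        (by
          intro a c hac
          apply Finset.card_le_card
          apply Finset.filter_subset_filter
          apply Finset.Ico_subset_Ico_left
          omega)
        (by
          intro a d
          have hsub : Finset.Ico (b - ((a + d : ℕ) : ℤ)) b =
              Finset.Ico (b - ((a + d : ℕ) : ℤ)) (b - (a:ℤ)) ∪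
              Finset.Ico (b - (a:ℤ)) b := by
            rw [Finset.Ico_union_Ico_eq_Ico (by push_cast; omega) (by omega)]
          rw [hsub, Finset.filter_union]
          have h1 := Finset.card_union_le
            ((Finset.Ico (b - ((a + d : ℕ) : ℤ)) (b - (a:ℤ))).filter (fun z => σ z = -1))
            ((Finset.Ico (b - (a:ℤ)) b).filter (fun z => σ z = -1))
          have h2 : ((Finset.Ico (b - ((a + d : ℕ) : ℤ)) (b - (a:ℤ))).filter
              (fun z => σ z = -1)).card ≤ d := by
            refine le_trans (Finset.card_filter_le _ _) ?_
            rw [Int.card_Ico]; omega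
          omega)
        (by
          intro K hK
          have heq : b - ((2 ^ ℓ * K : ℕ) : ℤ) = b - 2 ^ ℓ * (K:ℤ) := by push_cast; ring
          rw [heq]
          exact_mod_cast chunkL K hK)
        p hpN hLp
      exact_mod_cast this
end

section
/- Let 1 < α < 3/2. For any finite A ⊂ ℤ contained in an interval I of length 2^n, and any finite family {B_i}_{i=1}^k of pairwise disjoint intervals of length 2^m each containing at least one point of A, such that any two consecutive B_i satisfy a gap structure allowing k ≥ (2^{n-m}/(5M_n))^{log_{3.9} 2} where M_n = M₀2^{δn} — then summing disjoint local interaction lower bounds J(B̄_i⁻, B̄_i⁺) ≥ c·2^{mθ} over every other index i yields ∑_{x,y ∈ Ī, σ_x ≠ σ_y} |x−y|^{−α} ≥ (k/2)·c·2^{mθ}, where θ = min{2 − α − 10δ, log_{3.9} 2}. -/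
theorem stmt18 (α δ M₀ c : ℝ) (hα1 : 1 < α) (hα2 : α < 3 / 2) (hδ : 0 < δ)
    (hM₀ : 2 < M₀) (hc : 0 ≤ c) (θ : ℝ)
    (hθ : θ = min (2 - α - 10 * δ) (Real.logb 3.9 2))
    (n m : ℕ) (hmn : m ≤ n) (σ : ℤ → ℤ) (hσ : ∀ z, σ z = 1 ∨ σ z = -1)
    (Ibar : Finset ℤ) (k : ℕ) (B : Fin k → Finset ℤ)
    (hk : ((2 : ℝ) ^ (n - m) / (5 * (M₀ * 2 ^ (δ * (n : ℝ))))) ^ (Real.logb 3.9 2)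
        ≤ (k : ℝ))
    (hsub : ∀ i, B i ⊆ Ibar)
    (hgap : ∀ i j : Fin k, (i : ℕ) + 2 ≤ (j : ℕ) → Disjoint (B i) (B j))
    (hloc : ∀ i, c * (2 : ℝ) ^ ((m : ℝ) * θ) ≤
      ∑ x ∈ B i, ∑ y ∈ B i,
        if σ x ≠ σ y then |(x : ℝ) - (y : ℝ)| ^ (-α) else 0) :
    ((k : ℝ) / 2) * c * (2 : ℝ) ^ ((m : ℝ) * θ) ≤
      ∑ x ∈ Ibar, ∑ y ∈ Ibar,
        if σ x ≠ σ y then |(x : ℝ) - (y : ℝ)| ^ (-α) else 0 := by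
  classical
  set t : ℝ := c * (2 : ℝ) ^ ((m : ℝ) * θ) with ht
  have htnn : 0 ≤ t := by positivity
  set f : ℤ × ℤ → ℝ := fun p => if σ p.1 ≠ σ p.2 then |(p.1 : ℝ) - (p.2 : ℝ)| ^ (-α) else 0
    with hf
  have hfnn : ∀ p, 0 ≤ f p := by
    intro p; dsimp only [f]; split
    · positivity
    · exact le_rfl
  set E : Finset (Fin k) := Finset.univ.filter (fun i => (i : ℕ) % 2 = 0) with hE
  -- disjointness of products over even indices
  have hBd : ∀ i ∈ E, ∀ j ∈ E, i ≠ j → Disjoint (B i ×ˢ B i) (B j ×ˢ B j) := by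
    intro i hi j hj hij
    have hi' : (i : ℕ) % 2 = 0 := by simpa [hE] using hi
    have hj' : (j : ℕ) % 2 = 0 := by simpa [hE] using hj
    have hne : (i : ℕ) ≠ (j : ℕ) := fun h => hij (Fin.ext h)
    have hd : Disjoint (B i) (B j) := by
      rcases lt_or_gt_of_ne hne with h | h
      · exact hgap i j (by omega)
      · exact (hgap j i (by omega)).symm
    rw [Finset.disjoint_left]
    intro p hp hq
    exact (Finset.disjoint_left.1 hd) (Finset.mem_product.1 hp).1 (Finset.mem_product.1 hq).1
  -- cardinality bound: k ≤ 2 * E.card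
  have hcard : k ≤ 2 * E.card := by
    set O : Finset (Fin k) := Finset.univ.filter (fun i => ¬ (i : ℕ) % 2 = 0) with hO
    have hsum : E.card + O.card = k := by
      simpa [hE, hO] using
        Finset.card_filter_add_card_filter_not (s := (Finset.univ : Finset (Fin k)))
          (p := fun i => (i : ℕ) % 2 = 0)
    have hOE : O.card ≤ E.card := by
      apply Finset.card_le_card_of_injOn
        (fun i => ⟨(i : ℕ) - 1, lt_of_le_of_lt (Nat.sub_le _ _) i.isLt⟩)
      · intro i hi
        have hi' : ¬ (i : ℕ) % 2 = 0 := by simpa [hO] using hi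
        simp only [hE, Finset.mem_filter, Finset.mem_univ, true_and]
        simp only [Finset.coe_filter, Finset.mem_univ, true_and, Set.mem_setOf_eq]
        omega
      · intro i hi j hj hij
        have hi' : ¬ (i : ℕ) % 2 = 0 := by simpa [hO] using hi
        have hj' : ¬ (j : ℕ) % 2 = 0 := by simpa [hO] using hj
        have : (i : ℕ) - 1 = (j : ℕ) - 1 := congrArg Fin.val hij
        exact Fin.ext (by omega)
    omega
  -- chain of inequalities
  have key : (E.card : ℝ) * t ≤ ∑ p ∈ Ibar ×ˢ Ibar, f p := by
    have h1 : (E.card : ℝ) * t ≤ ∑ i ∈ E, ∑ p ∈ B i ×ˢ B i, f p := by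
      rw [show (E.card : ℝ) * t = ∑ _i ∈ E, t by rw [Finset.sum_const, nsmul_eq_mul]]
      refine Finset.sum_le_sum fun i _ => ?_
      have := hloc i
      rw [Finset.sum_product]
      simpa [f, ht] using this
    have h2 : ∑ i ∈ E, ∑ p ∈ B i ×ˢ B i, f p
        = ∑ p ∈ E.biUnion (fun i => B i ×ˢ B i), f p :=
      (Finset.sum_biUnion hBd).symm
    have h3 : ∑ p ∈ E.biUnion (fun i => B i ×ˢ B i), f p ≤ ∑ p ∈ Ibar ×ˢ Ibar, f p := by
      apply Finset.sum_le_sum_of_subset_of_nonneg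
      · intro p hp
        rcases Finset.mem_biUnion.1 hp with ⟨i, _, hpi⟩
        rcases Finset.mem_product.1 hpi with ⟨h1', h2'⟩
        exact Finset.mem_product.2 ⟨hsub i h1', hsub i h2'⟩
      · intro p _ _; exact hfnn p
    linarith
  have hkE : (k : ℝ) / 2 ≤ (E.card : ℝ) := by
    have : (k : ℝ) ≤ 2 * (E.card : ℝ) := by exact_mod_cast hcard
    linarith
  calc ((k : ℝ) / 2) * c * (2 : ℝ) ^ ((m : ℝ) * θ) = ((k : ℝ) / 2) * t := by ring
    _ ≤ (E.card : ℝ) * t := mul_le_mul_of_nonneg_right hkE htnn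
    _ ≤ ∑ p ∈ Ibar ×ˢ Ibar, f p := key
    _ = ∑ x ∈ Ibar, ∑ y ∈ Ibar,
        if σ x ≠ σ y then |(x : ℝ) - (y : ℝ)| ^ (-α) else 0 := by
        rw [Finset.sum_product]
end
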